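/- Lemma 4.1. Assume the nonsingularity assumption. Then the Markov operator P of the model preserves absolute continuity with respect to ℓ̄: for every finite measure μ on X with μ ≪ ℓ̄, the measure Pμ is absolutely continuous with respect to ℓ̄; equivalently, for every measurable A ⊆ X with ℓ̄ A = 0 one has ∫⁻ x, P(x,A) ∂μ = 0. -/

import Mathlib

open MeasureTheory ENNReal ProbabilityTheory Filter

noncomputable section

/-- The one-step transition probability of the chain of post-jump locations. -/
def Ptrans {Y I' Θ : Type*} [MeasurableSpace Y] [Fintype I'] [MeasurableSpace Θ]
    (ϑ : Measure Θ) (Λ : ℝ)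
    (S : I' → ℝ → Y → Y) (w : Θ → Y → Y) (p : Θ → Y → ℝ) (π' : I' → I' → Y → ℝ)
    (x : Y × I') (A : Set (Y × I')) : ℝ≥0∞ :=
  ∑ j : I', ∫⁻ θ, (∫⁻ t in Set.Ioi (0:ℝ),
      ENNReal.ofReal (Λ * Real.exp (-(Λ*t))) *
      Set.indicator A (fun _ => (1:ℝ≥0∞)) (w θ (S x.2 t x.1), j) *
      ENNReal.ofReal (π' x.2 j (w θ (S x.2 t x.1))) *
      ENNReal.ofReal (p θ (S x.2 t x.1))) ∂ϑ

/-- **Lemma 4.1.** Under the nonsingularity assumption, the Markov operator `P` of the chain of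
post-jump locations preserves absolute continuity with respect to `ℓ̄ = volume ⊗ count`:
if `μ ≪ ℓ̄` then `Pμ ≪ ℓ̄`, i.e. `∫⁻ x, P(x,A) ∂μ = 0` whenever `ℓ̄ A = 0`. -/
theorem lem_4_1
    {d N : ℕ} (hd : 0 < d) (hN : 0 < N)
    {Θ : Type*} [MeasurableSpace Θ] (ϑ : Measure Θ) [IsFiniteMeasure ϑ]
    (Λ : ℝ) (hΛ : 0 < Λ)
    (S : Fin N → ℝ → EuclideanSpace ℝ (Fin d) → EuclideanSpace ℝ (Fin d))
    (w : Θ → EuclideanSpace ℝ (Fin d) → EuclideanSpace ℝ (Fin d))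
    (p : Θ → EuclideanSpace ℝ (Fin d) → ℝ)
    (π' : Fin N → Fin N → EuclideanSpace ℝ (Fin d) → ℝ)
    (hS_meas : ∀ i, Measurable (fun q : ℝ × EuclideanSpace ℝ (Fin d) => S i q.1 q.2))
    (hw_meas : Measurable (fun q : Θ × EuclideanSpace ℝ (Fin d) => w q.1 q.2))
    (hp_meas : Measurable (fun q : Θ × EuclideanSpace ℝ (Fin d) => p q.1 q.2))
    (hπ_meas : ∀ i j, Measurable (π' i j))
    (hp_nonneg : ∀ θ y, 0 ≤ p θ y)
    (hp_int : ∀ y, ∫ θ, p θ y ∂ϑ = 1)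
    (hπ_nonneg : ∀ i j y, 0 ≤ π' i j y)
    (hπ_sum : ∀ i y, ∑ j, π' i j y = 1)
    -- nonsingularity assumption
    (hw_ns : ∀ θ, (volume : Measure (EuclideanSpace ℝ (Fin d))).map (w θ) ≪ volume)
    (hS_ns : ∀ i, ∀ t : ℝ, 0 ≤ t →
      (volume : Measure (EuclideanSpace ℝ (Fin d))).map (S i t) ≪ volume)
    -- an absolutely continuous finite measure
    (μ : Measure (EuclideanSpace ℝ (Fin d) × Fin N)) [IsFiniteMeasure μ]
    (hμ : μ ≪ (volume : Measure (EuclideanSpace ℝ (Fin d))).prod Measure.count) :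
    ∀ A : Set (EuclideanSpace ℝ (Fin d) × Fin N), MeasurableSet A →
      ((volume : Measure (EuclideanSpace ℝ (Fin d))).prod Measure.count) A = 0 →
      ∫⁻ x, Ptrans ϑ Λ S w p π' x A ∂μ = 0 := by
  intro A hA hA0
  have hSm : ∀ (i : Fin N) (t : ℝ), Measurable (S i t) :=
    fun i t => (hS_meas i).comp measurable_prodMk_left
  have hwm : ∀ θ, Measurable (w θ) := fun θ => hw_meas.comp measurable_prodMk_left
  -- slices of A are volume-null
  have hAj : ∀ j : Fin N, volume ((fun y : (EuclideanSpace ℝ (Fin d)) => (y, j)) ⁻¹' A) = 0 := by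
    intro j
    have hsub : ((fun y : (EuclideanSpace ℝ (Fin d)) => (y, j)) ⁻¹' A) ×ˢ ({j} : Set (Fin N)) ⊆ A := by
      rintro ⟨y, k⟩ ⟨hy, hk⟩
      simp only [Set.mem_singleton_iff] at hk
      subst hk; exact hy
    have h0 := measure_mono_null hsub hA0
    rwa [Measure.prod_prod, Measure.count_singleton, mul_one] at h0
  -- preimages under w θ ∘ S i t are null
  have hpre : ∀ (i : Fin N) (θ : Θ) (t : ℝ), 0 ≤ t → ∀ j : Fin N,
      volume {y : (EuclideanSpace ℝ (Fin d)) | (w θ (S i t y), j) ∈ A} = 0 := by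
    intro i θ t ht j
    have hBm : MeasurableSet ((fun y : (EuclideanSpace ℝ (Fin d)) => (y, j)) ⁻¹' A) :=
      hA.preimage (measurable_id.prodMk measurable_const)
    have hmap : (volume.map (S i t)).map (w θ) ≪ (volume : Measure (EuclideanSpace ℝ (Fin d))) :=
      ((hS_ns i t ht).map (hwm θ)).trans (hw_ns θ)
    have h0 : ((volume.map (S i t)).map (w θ)) ((fun y : (EuclideanSpace ℝ (Fin d)) => (y, j)) ⁻¹' A) = 0 :=
      hmap (hAj j)
    rw [Measure.map_apply (hwm θ) hBm, Measure.map_apply (hSm i t) ((hwm θ) hBm)] at h0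
    exact h0
  set ν : Measure (Θ × ℝ) := ϑ.prod (volume.restrict (Set.Ioi (0:ℝ))) with hν
  have hz : ∀ᵐ z ∂ν, 0 < z.2 := by
    rw [ae_iff]
    apply measure_mono_null (t := Set.univ ×ˢ {t : ℝ | ¬ 0 < t})
    · intro z hz; exact ⟨trivial, hz⟩
    · rw [Measure.prod_prod]
      have hset : {t : ℝ | ¬ 0 < t} = (Set.Ioi (0:ℝ))ᶜ := by
        ext t; simp
      have h0 : (volume.restrict (Set.Ioi (0:ℝ))) {t : ℝ | ¬ 0 < t} = 0 := by
        rw [hset, Measure.restrict_apply measurableSet_Ioi.compl]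
        simp [Set.Iic_inter_Ioi]
      rw [h0, mul_zero]
  have key : ∀ (i j : Fin N),
      ∀ᵐ y ∂(volume : Measure (EuclideanSpace ℝ (Fin d))),
        (∫⁻ θ, (∫⁻ t in Set.Ioi (0:ℝ),
          ENNReal.ofReal (Λ * Real.exp (-(Λ*t))) *
          Set.indicator A (fun _ => (1:ℝ≥0∞)) (w θ (S i t y), j) *
          ENNReal.ofReal (π' i j (w θ (S i t y))) *
          ENNReal.ofReal (p θ (S i t y))) ∂ϑ) = 0 := by
    intro i j
    set H : (EuclideanSpace ℝ (Fin d)) × (Θ × ℝ) → ℝ≥0∞ := fun q =>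
      ENNReal.ofReal (Λ * Real.exp (-(Λ * q.2.2))) *
      Set.indicator A (fun _ => (1:ℝ≥0∞)) (w q.2.1 (S i q.2.2 q.1), j) *
      ENNReal.ofReal (π' i j (w q.2.1 (S i q.2.2 q.1))) *
      ENNReal.ofReal (p q.2.1 (S i q.2.2 q.1)) with hH
    have hψm : Measurable (fun q : (EuclideanSpace ℝ (Fin d)) × (Θ × ℝ) => S i q.2.2 q.1) :=
      (hS_meas i).comp ((measurable_snd.snd).prodMk measurable_fst)
    have hφm : Measurable (fun q : (EuclideanSpace ℝ (Fin d)) × (Θ × ℝ) => w q.2.1 (S i q.2.2 q.1)) :=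
      hw_meas.comp ((measurable_snd.fst).prodMk hψm)
    have Hm : Measurable H := by
      apply Measurable.mul
      apply Measurable.mul
      apply Measurable.mul
      · exact (measurable_const.mul (((measurable_snd.snd).const_mul Λ).neg.exp)).ennreal_ofReal
      · exact (measurable_const.indicator hA).comp (hφm.prodMk measurable_const)
      · exact ((hπ_meas i j).comp hφm).ennreal_ofReal
      · exact (hp_meas.comp ((measurable_snd.fst).prodMk hψm)).ennreal_ofReal
    have hiter : ∀ y : (EuclideanSpace ℝ (Fin d)),
        (∫⁻ θ, (∫⁻ t in Set.Ioi (0:ℝ),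
          ENNReal.ofReal (Λ * Real.exp (-(Λ*t))) *
          Set.indicator A (fun _ => (1:ℝ≥0∞)) (w θ (S i t y), j) *
          ENNReal.ofReal (π' i j (w θ (S i t y))) *
          ENNReal.ofReal (p θ (S i t y))) ∂ϑ) = ∫⁻ z, H (y, z) ∂ν := by
      intro y
      exact (lintegral_prod (fun z => H (y, z))
        ((Hm.comp measurable_prodMk_left).aemeasurable)).symm
    have hgm : Measurable (fun y : (EuclideanSpace ℝ (Fin d)) => ∫⁻ z, H (y, z) ∂ν) :=
      Hm.lintegral_prod_right'
    have hinner : ∀ᵐ z ∂ν, ∫⁻ y, H (y, z) ∂(volume : Measure (EuclideanSpace ℝ (Fin d))) = 0 := by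
      filter_upwards [hz] with z hz0
      have hnull := hpre i z.1 z.2 hz0.le j
      have hae : ∀ᵐ y ∂(volume : Measure (EuclideanSpace ℝ (Fin d))), H (y, z) = 0 := by
        rw [ae_iff]
        apply measure_mono_null _ hnull
        intro y hy
        simp only [Set.mem_setOf_eq] at hy ⊢
        by_contra hmem
        exact hy (by simp [hH, Set.indicator_of_notMem hmem])
      rw [lintegral_congr_ae hae, lintegral_zero]
    have hint0 : ∫⁻ y, (∫⁻ z, H (y, z) ∂ν) ∂(volume : Measure (EuclideanSpace ℝ (Fin d))) = 0 := by
      rw [lintegral_lintegral_swap Hm.aemeasurable, lintegral_congr_ae hinner,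
        lintegral_zero]
    have hae0 : (fun y : (EuclideanSpace ℝ (Fin d)) => ∫⁻ z, H (y, z) ∂ν) =ᵐ[(volume : Measure (EuclideanSpace ℝ (Fin d)))] 0 :=
      (lintegral_eq_zero_iff hgm).mp hint0
    filter_upwards [hae0] with y hy
    rw [hiter y]
    exact hy
  have hPt : ∀ i : Fin N, ∀ᵐ y ∂(volume : Measure (EuclideanSpace ℝ (Fin d))),
      Ptrans ϑ Λ S w p π' (y, i) A = 0 := by
    intro i
    have hall := ae_all_iff.mpr (fun j => key i j)
    filter_upwards [hall] with y hy
    simp only [Ptrans]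
    exact Finset.sum_eq_zero (fun j _ => hy j)
  have hℓ : ((volume : Measure (EuclideanSpace ℝ (Fin d))).prod Measure.count)
      {x : (EuclideanSpace ℝ (Fin d)) × Fin N | Ptrans ϑ Λ S w p π' x A ≠ 0} = 0 := by
    apply measure_mono_null
      (t := ⋃ i : Fin N, {y : (EuclideanSpace ℝ (Fin d)) | Ptrans ϑ Λ S w p π' (y, i) A ≠ 0} ×ˢ ({i} : Set (Fin N)))
    · rintro ⟨y, i⟩ hx
      exact Set.mem_iUnion.2 ⟨i, hx, rfl⟩
    · refine le_antisymm (le_trans (measure_iUnion_le _) ?_) zero_le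
      have h0 : ∀ i : Fin N, ((volume : Measure (EuclideanSpace ℝ (Fin d))).prod Measure.count)
          ({y : (EuclideanSpace ℝ (Fin d)) | Ptrans ϑ Λ S w p π' (y, i) A ≠ 0} ×ˢ ({i} : Set (Fin N))) = 0 := by
        intro i
        rw [Measure.prod_prod]
        have := ae_iff.mp (hPt i)
        rw [show {y : (EuclideanSpace ℝ (Fin d)) | Ptrans ϑ Λ S w p π' (y, i) A ≠ 0}
            = {y : (EuclideanSpace ℝ (Fin d)) | ¬ Ptrans ϑ Λ S w p π' (y, i) A = 0} from rfl, this, zero_mul]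
      exact le_of_eq (ENNReal.tsum_eq_zero.mpr h0)
  have hμ0 : ∀ᵐ x ∂μ, Ptrans ϑ Λ S w p π' x A = 0 := ae_iff.mpr (hμ hℓ)
  rw [lintegral_congr_ae hμ0, lintegral_zero]
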